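/- Either liminf_{n→∞} V(n)/n² > 0 or V(n)/n² → 0 as n → ∞. Equivalently: if liminf_{n→∞} V(n)/n² = 0, then V(n)/n² → 0. -/
import Mathlib


open MeasureTheory Filter Set Topology

/-- Fejér-type kernel: `I_n(y) = sin²(ny/2)/sin²(y/2)` for `y ≠ 0`, `I_n(0) = n²`. -/
noncomputable def fejerKernel (n : ℕ) (y : ℝ) : ℝ :=
  if y = 0 then (n : ℝ) ^ 2 else Real.sin (n * y / 2) ^ 2 / Real.sin (y / 2) ^ 2

/-- Variance functional `V(n) = ∫_{[0,π]} I_n(y) dμ(y)`. -/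
noncomputable def varV (μ : Measure ℝ) (n : ℕ) : ℝ :=
  ∫ y in Icc 0 Real.pi, fejerKernel n y ∂μ

/-- `G(x) = μ([0,x])` for a measure `μ` on `[0,π]`. -/
noncomputable def specG (μ : Measure ℝ) (x : ℝ) : ℝ :=
  (μ (Icc 0 x)).toReal

/-- A function `L : (0,∞) → (0,∞)` is slowly varying at infinity if
`L(λx)/L(x) → 1` as `x → ∞` for every `λ > 0`. -/
def SlowlyVarying (L : ℝ → ℝ) : Prop :=
  ∀ lam : ℝ, 0 < lam → Tendsto (fun x => L (lam * x) / L x) atTop (𝓝 1)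

lemma abs_sin_nat_mul_le' (n : ℕ) (t : ℝ) : |Real.sin (n * t)| ≤ n * |Real.sin t| := by
  induction n with
  | zero => simp
  | succ n ih =>
    push_cast
    rw [show ((n : ℝ) + 1) * t = n * t + t by ring, Real.sin_add]
    calc |Real.sin (n*t) * Real.cos t + Real.cos (n*t) * Real.sin t|
        ≤ |Real.sin (n*t) * Real.cos t| + |Real.cos (n*t) * Real.sin t| := abs_add_le _ _
      _ ≤ |Real.sin (n*t)| * 1 + 1 * |Real.sin t| := by
          rw [abs_mul, abs_mul]
          gcongr
          · exact Real.abs_cos_le_one t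
          · exact Real.abs_cos_le_one _
      _ ≤ (n : ℝ) * |Real.sin t| + 1 * |Real.sin t| := by
          rw [mul_one]
          gcongr
      _ = ((n : ℝ) + 1) * |Real.sin t| := by ring

lemma fejerKernel_measurable (n : ℕ) : Measurable (fejerKernel n) := by
  unfold fejerKernel
  refine Measurable.ite (MeasurableSet.singleton 0 |>.congr ?_) measurable_const ?_
  · ext y; simp
  · exact ((Real.measurable_sin.comp (measurable_id.const_mul _ |>.div_const 2)).pow_const 2).div
      ((Real.measurable_sin.comp (measurable_id.div_const 2)).pow_const 2)

lemma fejerKernel_nonneg (n : ℕ) (y : ℝ) : 0 ≤ fejerKernel n y := by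
  unfold fejerKernel
  split <;> positivity

lemma fejerKernel_le (n : ℕ) (y : ℝ) : fejerKernel n y ≤ (n : ℝ) ^ 2 := by
  unfold fejerKernel
  split
  · exact le_refl _
  · rcases eq_or_ne (Real.sin (y / 2)) 0 with hs | hs
    · simp [hs]
    · have hs2 : 0 < Real.sin (y / 2) ^ 2 := by positivity
      rw [div_le_iff₀ hs2]
      calc Real.sin (↑n * y / 2) ^ 2 = |Real.sin (↑n * (y / 2))| ^ 2 := by
            rw [sq_abs, mul_div_assoc]
        _ ≤ ((n : ℝ) * |Real.sin (y / 2)|) ^ 2 := by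
            have := abs_sin_nat_mul_le' n (y / 2)
            exact pow_le_pow_left₀ (abs_nonneg _) this 2
        _ = (n : ℝ) ^ 2 * Real.sin (y / 2) ^ 2 := by
            rw [mul_pow, sq_abs]

/-- Dichotomy at `γ = 2`: if `liminf V(n)/n² = 0` then `V(n)/n² → 0`. -/
theorem variance_quadratic_dichotomy (μ : Measure ℝ) [IsFiniteMeasure μ]
    (hsupp : μ (Icc 0 Real.pi)ᶜ = 0)
    (h : Filter.liminf (fun n : ℕ => varV μ n / (n : ℝ) ^ 2) atTop = 0) :
    Tendsto (fun n : ℕ => varV μ n / (n : ℝ) ^ 2) atTop (𝓝 0) := by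
  set ν := μ.restrict (Icc 0 Real.pi) with hν
  set g : ℝ → ℝ := Set.indicator {0} (fun _ => (1 : ℝ)) with hg
  have key : Tendsto (fun n : ℕ => ∫ y, fejerKernel n y / (n : ℝ) ^ 2 ∂ν) atTop
      (𝓝 (∫ y, g y ∂ν)) := by
    refine tendsto_integral_of_dominated_convergence (fun _ => (1 : ℝ))
      (fun n => ((fejerKernel_measurable n).div_const _).aestronglyMeasurable)
      (integrable_const 1) (fun n => ?_) ?_
    · refine Filter.Eventually.of_forall fun y => ?_
      rw [Real.norm_eq_abs,
        abs_of_nonneg (div_nonneg (fejerKernel_nonneg n y) (sq_nonneg _))]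
      rcases eq_or_ne (n : ℝ) 0 with hn | hn
      · simp [hn]
      · rw [div_le_one (by positivity)]
        exact (fejerKernel_le n y).trans_eq rfl
    · rw [hν, ae_restrict_iff' measurableSet_Icc]
      refine Filter.Eventually.of_forall fun y hy => ?_
      rcases eq_or_ne y 0 with rfl | hy0
      · have hev : ∀ᶠ n : ℕ in atTop, fejerKernel n 0 / (n : ℝ) ^ 2 = g 0 := by
          filter_upwards [eventually_ge_atTop 1] with n hn
          have hn' : (n : ℝ) ≠ 0 := Nat.cast_ne_zero.mpr (by omega)
          simp [fejerKernel, hg, div_self (pow_ne_zero 2 hn')]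
        exact Tendsto.congr' (by filter_upwards [hev] with n h; exact h.symm)
          tendsto_const_nhds
      · have hspos : 0 < Real.sin (y / 2) := by
          apply Real.sin_pos_of_pos_of_lt_pi
          · have := lt_of_le_of_ne hy.1 (Ne.symm hy0); linarith
          · have := hy.2; nlinarith [Real.pi_pos]
        have hgy : g y = 0 := Set.indicator_of_notMem (by simpa using hy0) _
        rw [hgy]
        have hb : Tendsto (fun n : ℕ => (1 / Real.sin (y / 2) ^ 2) / (n : ℝ) ^ 2)
            atTop (𝓝 0) :=
          Tendsto.div_atTop tendsto_const_nhds
            ((tendsto_pow_atTop two_ne_zero).comp tendsto_natCast_atTop_atTop)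
        refine squeeze_zero
          (fun n => div_nonneg (fejerKernel_nonneg n y) (sq_nonneg _)) (fun n => ?_) hb
        rw [fejerKernel, if_neg hy0]
        have h1 : Real.sin (↑n * y / 2) ^ 2 ≤ 1 := Real.sin_sq_le_one _
        have h2 : (0:ℝ) < Real.sin (y / 2) ^ 2 := by positivity
        gcongr
  have heq : ∀ n : ℕ, varV μ n / (n : ℝ) ^ 2 = ∫ y, fejerKernel n y / (n : ℝ) ^ 2 ∂ν := by
    intro n
    rw [varV, integral_div]
  have key' : Tendsto (fun n : ℕ => varV μ n / (n : ℝ) ^ 2) atTop (𝓝 (∫ y, g y ∂ν)) := by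
    exact key.congr fun n => (heq n).symm
  have hL : (∫ y, g y ∂ν) = 0 := by
    rw [← h, key'.liminf_eq]
  rwa [hL] at key'
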